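/- Let N, n, m, q be natural numbers with n = m + q, q ≥ 1 and N > n. Let b ∈ ℝ^{q+1}, c ∈ ℝ^{m+1} and ŷ ∈ ℝ^N. If T_{N−n}(c) T_{N−q}(b) ŷ = 0, then T_{N−n}(b) (T_{N−m}(c) ŷ) = 0; that is, the prefiltered model-compliant output data ŷ' = T_{N−m}(c) ŷ are model-compliant with respect to the unknown factor b, so their dynamics are completely determined by the unknown poles. -/
import Mathlib


open Matrix

/-- Banded Toeplitz matrix `T_k(a)` of a coefficient vector `a = (a_n, …, a_1, a_0)`:
entry `(i,j)` equals the coefficient `a_{n-(j-i)}` (vector component `j - i`, since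
component `t` of the vector is the coefficient `a_{n-t}`) when `0 ≤ j - i ≤ n`, else `0`.
The number of columns is passed explicitly (intended: `N = k + n`). -/
def toep {R : Type*} [Semiring R] (k N n : ℕ) (a : Fin (n + 1) → R) :
    Matrix (Fin k) (Fin N) R :=
  Matrix.of fun i j =>
    if h : i.val ≤ j.val ∧ j.val - i.val ≤ n then a ⟨j.val - i.val, by omega⟩ else 0

/-- Hankel matrix `H_q(y) ∈ R^{(N-q) × (q+1)}` with entries `(H_q(y))_{i,j} = y_{i+j}` (0-based). -/
def hank {R : Type*} [Semiring R] (N q : ℕ) (y : Fin N → R) :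
    Matrix (Fin (N - q)) (Fin (q + 1)) R :=
  Matrix.of fun i j => y ⟨i.val + j.val, by have hi := i.isLt; have hj := j.isLt; omega⟩

/-- Convolution of coefficient vectors: `(c ⋆ b)_k = Σ_{i+j=k} c_i b_j`. -/
def convVec {R : Type*} [Semiring R] (m q : ℕ) (c : Fin (m + 1) → R) (b : Fin (q + 1) → R) :
    Fin (m + q + 1) → R :=
  fun k => ∑ i : Fin (m + 1), ∑ j : Fin (q + 1), if i.val + j.val = k.val then c i * b j else 0

lemma toep_apply_eq_sum {R : Type*} [Semiring R] (K K' n : ℕ) (a : Fin (n + 1) → R)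
    (i : Fin K) (j : Fin K') :
    toep K K' n a i j = ∑ k : Fin (n + 1), if i.val + k.val = j.val then a k else 0 := by
  unfold toep
  simp only [Matrix.of_apply]
  split_ifs with h
  · rw [Finset.sum_eq_single ⟨j.val - i.val, by omega⟩]
    · rw [if_pos (by simp; omega)]
    · intro k _ hk
      rw [if_neg]
      intro hc
      exact hk (Fin.ext (by simp; omega))
    · intro hk; exact absurd (Finset.mem_univ _) hk
  · symm
    apply Finset.sum_eq_zero
    intro k _
    rw [if_neg]
    omega

lemma toep_mul_toep_apply {R : Type*} [CommSemiring R] (K1 K2 N m q : ℕ)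
    (c : Fin (m + 1) → R) (b : Fin (q + 1) → R) (i : Fin K1) (j : Fin N)
    (hK : i.val + m < K2) :
    (toep K1 K2 m c * toep K2 N q b) i j
      = ∑ k : Fin (m + 1), ∑ l : Fin (q + 1),
          if i.val + k.val + l.val = j.val then c k * b l else 0 := by
  rw [Matrix.mul_apply]
  simp only [toep_apply_eq_sum]
  simp only [Finset.sum_mul, Finset.mul_sum]
  rw [Finset.sum_comm]
  conv_rhs => rw [Finset.sum_comm]
  apply Finset.sum_congr rfl
  intro l _
  rw [Finset.sum_comm]
  apply Finset.sum_congr rfl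
  intro k _
  rw [Finset.sum_eq_single (⟨i.val + k.val, by omega⟩ : Fin K2)]
  · simp only [ite_mul, mul_ite, zero_mul, mul_zero, Fin.val_mk, if_true]
  · intro t _ ht
    have hne : ¬ ((i : ℕ) + (k : ℕ) = (t : ℕ)) :=
      fun hc => ht (Fin.ext (by simp only [Fin.val_mk]; omega))
    simp [hne]
  · intro hk; exact absurd (Finset.mem_univ _) hk

/-- If `T_{N-n}(c) T_{N-q}(b) ŷ = 0` then `T_{N-n}(b) (T_{N-m}(c) ŷ) = 0`: the
prefiltered model-compliant output data `ŷ' = T_{N-m}(c) ŷ` are model-compliant with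
respect to the unknown factor `b`. -/
theorem stmt15 (N m q : ℕ) (hq : 1 ≤ q) (hN : m + q < N)
    (b : Fin (q + 1) → ℝ) (c : Fin (m + 1) → ℝ) (yhat : Fin N → ℝ)
    (h : toep (N - (m + q)) (N - q) m c *ᵥ (toep (N - q) N q b *ᵥ yhat) = 0) :
    toep (N - (m + q)) (N - m) q b *ᵥ (toep (N - m) N m c *ᵥ yhat) = 0 := by
  rw [Matrix.mulVec_mulVec] at h ⊢
  have key : toep (N - (m + q)) (N - m) q b * toep (N - m) N m c
      = toep (N - (m + q)) (N - q) m c * toep (N - q) N q b := by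
    ext i j
    rw [toep_mul_toep_apply _ _ _ _ _ _ _ _ _ (by omega),
        toep_mul_toep_apply _ _ _ _ _ _ _ _ _ (by omega)]
    rw [Finset.sum_comm]
    apply Finset.sum_congr rfl; intro k _
    apply Finset.sum_congr rfl; intro l _
    rw [mul_comm]
    congr 1
    simp only [eq_iff_iff]
    omega
  rw [key, h]
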